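/- Let R be a complete discrete valuation ring with uniformizer π, such that n is a positive integer invertible in R and R contains a primitive n-th root of unity. Let a, b be positive integers with gcd(a, n) = gcd(b, n) = 1, and let r be an integer with gcd(r, n) = 1 and n dividing a + r·b. Let C = R[[z,w]]/(π − z^{a}·w^{b}), and let the group μ_n of n-th roots of unity in R act on C by R-algebra automorphisms via [ξ](z) = ξ·z and [ξ](w) = ξ^{r}·w (this is well defined since n divides a + r·b). Let ψ : B = R[[s,t]]/(π^{n} − s^{a}·t^{b}) → C be the R-algebra homomorphism determined by s ↦ z^{n}, t ↦ w^{n}. Then the subring C^{μ_n} of μ_n-invariant elements of C is generated as a module over ψ(B) by the invariant monomials z^{i}·w^{j} with 0 ≤ i, j < n and n dividing i + r·j. -/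

import Mathlib

namespace stmt7aux

open MvPowerSeries Finsupp

lemma fin2_eq (d : Fin 2 →₀ ℕ) :
    d = Finsupp.single 0 (d 0) + Finsupp.single 1 (d 1) := by
  ext i; fin_cases i <;> simp

lemma fin2_app0 (i j : ℕ) : (Finsupp.single 0 i + Finsupp.single 1 j : Fin 2 →₀ ℕ) 0 = i := by simp

lemma fin2_app1 (i j : ℕ) : (Finsupp.single 0 i + Finsupp.single 1 j : Fin 2 →₀ ℕ) 1 = j := by simp

lemma fin2_le (i j : ℕ) (d : Fin 2 →₀ ℕ) :
    (Finsupp.single (0 : Fin 2) i + Finsupp.single 1 j) ≤ d ↔ i ≤ d 0 ∧ j ≤ d 1 := by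
  rw [Finsupp.le_def]
  constructor
  · intro h; exact ⟨by simpa using h 0, by simpa using h 1⟩
  · rintro ⟨h0, h1⟩ s
    fin_cases s
    · simpa using h0
    · simpa using h1

lemma fin2_sub0 (i j : ℕ) (d : Fin 2 →₀ ℕ) :
    (d - (Finsupp.single 0 i + Finsupp.single 1 j) : Fin 2 →₀ ℕ) 0 = d 0 - i := by
  rw [Finsupp.tsub_apply, fin2_app0]

lemma fin2_sub1 (i j : ℕ) (d : Fin 2 →₀ ℕ) :
    (d - (Finsupp.single 0 i + Finsupp.single 1 j) : Fin 2 →₀ ℕ) 1 = d 1 - j := by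
  rw [Finsupp.tsub_apply, fin2_app1]

variable {R : Type} [CommRing R]

lemma chi_eq (ξ : Rˣ) (r : ℤ) (i j : ℕ) :
    ((ξ : R)) ^ i * (((ξ ^ r : Rˣ) : R)) ^ j = ((ξ ^ ((i : ℤ) + r * j) : Rˣ) : R) := by
  rw [← Units.val_pow_eq_pow_val, ← Units.val_pow_eq_pow_val, ← Units.val_mul]
  congr 1
  rw [← zpow_natCast ξ i, ← zpow_natCast (ξ ^ r) j, ← zpow_mul, ← zpow_add]

lemma unit_zpow_one {n : ℕ} {ξ : Rˣ} (hξ : ξ ^ n = 1) {m : ℤ} (h : (n : ℤ) ∣ m) :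
    ξ ^ m = 1 := by
  obtain ⟨k, rfl⟩ := h
  rw [zpow_mul, zpow_natCast, hξ, one_zpow]

lemma sum_root [IsDomain R] {n : ℕ} (hn : 0 < n) {u : Rˣ} (hu : IsPrimitiveRoot u n) (m : ℤ) :
    (∑ k ∈ Finset.range n, ((u ^ (m * k) : Rˣ) : R)) = if (n : ℤ) ∣ m then (n : R) else 0 := by
  have hterm : ∀ k : ℕ, ((u ^ (m * k) : Rˣ) : R) = ((u ^ m : Rˣ) : R) ^ k := by
    intro k
    rw [zpow_mul, zpow_natCast, Units.val_pow_eq_pow_val]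
  simp only [hterm]
  split_ifs with h
  · have h1 : u ^ m = 1 := (hu.zpow_eq_one_iff_dvd m).2 h
    simp [h1]
  · have hne : ((u ^ m : Rˣ) : R) ≠ 1 := by
      intro he
      exact h ((hu.zpow_eq_one_iff_dvd m).1 (Units.val_eq_one.mp he))
    have hpowu : (u ^ m) ^ n = 1 := by
      rw [← zpow_natCast (u ^ m) n, ← zpow_mul, mul_comm, zpow_mul, zpow_natCast,
        hu.pow_eq_one, one_zpow]
    have hpow : ((u ^ m : Rˣ) : R) ^ n = 1 := by
      rw [← Units.val_pow_eq_pow_val, hpowu, Units.val_one]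
    have hgeo := geom_sum_mul ((u ^ m : Rˣ) : R) n
    rw [hpow, sub_self] at hgeo
    rcases mul_eq_zero.mp hgeo with h0 | h0
    · exact h0
    · exact absurd (sub_eq_zero.mp h0) hne

section act

variable {n : ℕ} {r : ℤ}
variable (act : Rˣ → MvPowerSeries (Fin 2) R → MvPowerSeries (Fin 2) R)
variable (hact : ∀ (ξ : Rˣ) (f : MvPowerSeries (Fin 2) R) (d : Fin 2 →₀ ℕ),
      MvPowerSeries.coeff d (act ξ f)
        = ((ξ : R) ^ (d 0)) * (((ξ ^ r : Rˣ) : R) ^ (d 1)) * MvPowerSeries.coeff d f)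
include hact

lemma act_zero (ξ : Rˣ) : act ξ 0 = 0 := by
  ext d
  rw [hact]
  simp

lemma act_add (ξ : Rˣ) (f g : MvPowerSeries (Fin 2) R) :
    act ξ (f + g) = act ξ f + act ξ g := by
  ext d; simp only [hact, map_add, mul_add]

lemma act_mul (ξ : Rˣ) (f g : MvPowerSeries (Fin 2) R) :
    act ξ (f * g) = act ξ f * act ξ g := by
  ext d
  rw [hact, MvPowerSeries.coeff_mul, MvPowerSeries.coeff_mul, Finset.mul_sum]
  refine Finset.sum_congr rfl fun p hp => ?_
  rw [Finset.HasAntidiagonal.mem_antidiagonal] at hp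
  rw [hact, hact]
  have h0 : d 0 = p.1 0 + p.2 0 := by rw [← hp]; rfl
  have h1 : d 1 = p.1 1 + p.2 1 := by rw [← hp]; rfl
  rw [h0, h1, pow_add, pow_add]; ring

lemma act_monomial (ξ : Rˣ) (e : Fin 2 →₀ ℕ) (c : R) :
    act ξ (MvPowerSeries.monomial e c)
      = ((ξ : R) ^ (e 0) * ((ξ ^ r : Rˣ) : R) ^ (e 1)) • MvPowerSeries.monomial e c := by
  ext d
  simp only [hact, map_smul, smul_eq_mul, MvPowerSeries.coeff_monomial]
  split_ifs with h
  · subst h; ring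
  · ring

lemma act_Phi (hn : 0 < n) (ξ : Rˣ) (hξ : ξ ^ n = 1)
    (Φ : MvPowerSeries (Fin 2) R →ₐ[R] MvPowerSeries (Fin 2) R)
    (hΦ : ∀ (f : MvPowerSeries (Fin 2) R) (d : Fin 2 →₀ ℕ),
      MvPowerSeries.coeff d (Φ f) =
        if n ∣ d 0 ∧ n ∣ d 1 then
          MvPowerSeries.coeff
            (Finsupp.single 0 (d 0 / n) + Finsupp.single 1 (d 1 / n)) f
        else 0)
    (g : MvPowerSeries (Fin 2) R) : act ξ (Φ g) = Φ g := by
  ext d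
  rw [hact, hΦ]
  split_ifs with h
  · have h0 : ((ξ : R)) ^ (d 0) = 1 := by
      obtain ⟨k, hk⟩ := h.1
      rw [hk, pow_mul, ← Units.val_pow_eq_pow_val, hξ, Units.val_one, one_pow]
    have hξr : (ξ ^ r) ^ n = 1 := by
      rw [← zpow_natCast (ξ ^ r) n, ← zpow_mul, mul_comm, zpow_mul, zpow_natCast, hξ, one_zpow]
    have h1 : (((ξ ^ r : Rˣ) : R)) ^ (d 1) = 1 := by
      obtain ⟨k, hk⟩ := h.2
      rw [hk, pow_mul, ← Units.val_pow_eq_pow_val, hξr, Units.val_one, one_pow]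
    rw [h0, h1, one_mul, one_mul]
  · rw [mul_zero]

end act

end stmt7aux


/-- The ideal `(π^{m} − z^{a}·w^{b})` of `R[[z,w]] = MvPowerSeries (Fin 2) R`
(with `z = X 0`, `w = X 1`). -/
noncomputable abbrev stmt7.I (R : Type) [CommRing R] (π : R) (m a b : ℕ) :
    Ideal (MvPowerSeries (Fin 2) R) :=
  Ideal.span {(MvPowerSeries.C (σ := Fin 2) (R := R) π) ^ m
    - (MvPowerSeries.X (0 : Fin 2)) ^ a * (MvPowerSeries.X (1 : Fin 2)) ^ b}

/-- The quotient ring `R[[z,w]]/(π^{m} − z^{a}·w^{b})`. -/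
abbrev stmt7.Q (R : Type) [CommRing R] (π : R) (m a b : ℕ) : Type :=
  MvPowerSeries (Fin 2) R ⧸ stmt7.I R π m a b

/-- Let `R` be a complete discrete valuation ring with uniformizer `π`,
such that `n` is a positive integer invertible in `R` and `R` contains a primitive
`n`-th root of unity.  Let `a, b` be positive integers with `gcd(a,n) = gcd(b,n) = 1`,
and let `r` be an integer with `gcd(r,n) = 1` and `n ∣ a + r·b`.  Let
`C = R[[z,w]]/(π − z^a·w^b)`, and let the group `μ_n` of `n`-th roots of unity in `R`
act on `C` by `R`-algebra automorphisms via `[ξ](z) = ξ·z` and `[ξ](w) = ξ^r·w`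
(encoded by the coefficient characterization `hact` on the power series ring and the
compatibility `hactC` with the quotient map).  Let
`ψ : B = R[[s,t]]/(π^n − s^a·t^b) → C` be the `R`-algebra homomorphism determined by
`s ↦ z^n`, `t ↦ w^n` (encoded by the coefficient characterization of the underlying
substitution `Φ` and compatibility with the quotient maps).  Then the subring `C^{μ_n}`
of `μ_n`-invariant elements of `C` is generated as a module over `ψ(B)` by the invariant
monomials `z^i·w^j` with `0 ≤ i, j < n` and `n ∣ i + r·j`. -/
theorem stmt_7
    (R : Type) [CommRing R] [IsDomain R] [IsDiscreteValuationRing R]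
    [IsAdicComplete (IsLocalRing.maximalIdeal R) R]
    (π : R) (hπ : Irreducible π)
    (n : ℕ) (hn : 0 < n) (hunit : IsUnit (n : R))
    (hroot : ∃ ζ : R, IsPrimitiveRoot ζ n)
    (a b : ℕ) (ha : 0 < a) (hb : 0 < b)
    (han : Nat.gcd a n = 1) (hbn : Nat.gcd b n = 1)
    (r : ℤ) (hrn : Int.gcd r n = 1) (hdvd : (n : ℤ) ∣ (a : ℤ) + r * (b : ℤ))
    (act : Rˣ → MvPowerSeries (Fin 2) R → MvPowerSeries (Fin 2) R)
    (hact : ∀ (ξ : Rˣ) (f : MvPowerSeries (Fin 2) R) (d : Fin 2 →₀ ℕ),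
      MvPowerSeries.coeff d (act ξ f)
        = ((ξ : R) ^ (d 0)) * (((ξ ^ r : Rˣ) : R) ^ (d 1)) * MvPowerSeries.coeff d f)
    (actC : Rˣ → stmt7.Q R π 1 a b → stmt7.Q R π 1 a b)
    (hactC : ∀ ξ ∈ rootsOfUnity n R, ∀ f : MvPowerSeries (Fin 2) R,
      actC ξ (Ideal.Quotient.mk (stmt7.I R π 1 a b) f)
        = Ideal.Quotient.mk (stmt7.I R π 1 a b) (act ξ f))
    (Φ : MvPowerSeries (Fin 2) R →ₐ[R] MvPowerSeries (Fin 2) R)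
    (hΦ : ∀ (f : MvPowerSeries (Fin 2) R) (d : Fin 2 →₀ ℕ),
      MvPowerSeries.coeff d (Φ f) =
        if n ∣ d 0 ∧ n ∣ d 1 then
          MvPowerSeries.coeff
            (Finsupp.single 0 (d 0 / n) + Finsupp.single 1 (d 1 / n)) f
        else 0)
    (ψ : stmt7.Q R π n a b →+* stmt7.Q R π 1 a b)
    (hψ : ∀ f : MvPowerSeries (Fin 2) R,
      ψ (Ideal.Quotient.mk (stmt7.I R π n a b) f)
        = Ideal.Quotient.mk (stmt7.I R π 1 a b) (Φ f)) :
    letI : Algebra (stmt7.Q R π n a b) (stmt7.Q R π 1 a b) := ψ.toAlgebra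
    {x : stmt7.Q R π 1 a b | ∀ ξ ∈ rootsOfUnity n R, actC ξ x = x}
      = ↑(Submodule.span (stmt7.Q R π n a b)
          {x : stmt7.Q R π 1 a b | ∃ i j : ℕ, i < n ∧ j < n ∧
            (n : ℤ) ∣ (i : ℤ) + r * (j : ℤ) ∧
            x = (Ideal.Quotient.mk (stmt7.I R π 1 a b) (MvPowerSeries.X (0 : Fin 2))) ^ i
              * (Ideal.Quotient.mk (stmt7.I R π 1 a b) (MvPowerSeries.X (1 : Fin 2))) ^ j}) := by
  letI : Algebra (stmt7.Q R π n a b) (stmt7.Q R π 1 a b) := ψ.toAlgebra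
  have halg : algebraMap (stmt7.Q R π n a b) (stmt7.Q R π 1 a b) = ψ :=
    RingHom.algebraMap_toAlgebra ψ
  obtain ⟨ζ, hζ⟩ := hroot
  set u : Rˣ := (hζ.isUnit hn.ne').unit with hu_def
  have hu : IsPrimitiveRoot u n := hζ.isUnit_unit hn.ne'
  have hu_mem : ∀ k : ℕ, u ^ k ∈ rootsOfUnity n R := by
    intro k
    rw [mem_rootsOfUnity, ← pow_mul, mul_comm, pow_mul, hu.pow_eq_one, one_pow]
  set mk1 := Ideal.Quotient.mk (stmt7.I R π 1 a b) with hmk1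
  have hmono : ∀ i j : ℕ,
      (MvPowerSeries.monomial (Finsupp.single (0 : Fin 2) i + Finsupp.single 1 j) (1 : R))
        = MvPowerSeries.X (0 : Fin 2) ^ i * MvPowerSeries.X (1 : Fin 2) ^ j := by
    intro i j
    rw [MvPowerSeries.X_pow_eq, MvPowerSeries.X_pow_eq, MvPowerSeries.monomial_mul_monomial,
      one_mul]
  refine Set.Subset.antisymm ?_ ?_
  · -- invariants ⊆ span
    intro x hx
    simp only [Set.mem_setOf_eq] at hx
    obtain ⟨f, hf⟩ := Ideal.Quotient.mk_surjective x
    set g : MvPowerSeries (Fin 2) R :=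
      (fun d => if (n : ℤ) ∣ ((d 0 : ℤ) + r * (d 1 : ℤ)) then MvPowerSeries.coeff d f else 0)
      with hg_def
    have hg : ∀ d : Fin 2 →₀ ℕ, MvPowerSeries.coeff d g
        = if (n : ℤ) ∣ ((d 0 : ℤ) + r * (d 1 : ℤ)) then MvPowerSeries.coeff d f else 0 :=
      fun d => rfl
    have hsum : ∑ k ∈ Finset.range n, act (u ^ k) f = (n : ℕ) • g := by
      ext d
      rw [map_sum, map_nsmul]
      have hterm : ∀ k ∈ Finset.range n,
          MvPowerSeries.coeff d (act (u ^ k) f)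
            = ((u ^ ((((d 0 : ℤ) + r * (d 1 : ℤ))) * (k : ℤ)) : Rˣ) : R)
                * MvPowerSeries.coeff d f := by
        intro k _
        rw [hact, stmt7aux.chi_eq, ← zpow_natCast u k, ← zpow_mul,
          mul_comm (k : ℤ) (((d 0 : ℤ) + r * (d 1 : ℤ)))]
      rw [Finset.sum_congr rfl hterm, ← Finset.sum_mul,
        stmt7aux.sum_root hn hu (((d 0 : ℤ) + r * (d 1 : ℤ)))]
      split_ifs with h
      · rw [hg, if_pos h, nsmul_eq_mul]
      · rw [hg, if_neg h, smul_zero, zero_mul]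
    have hnx : (n : ℕ) • x = (n : ℕ) • mk1 g := by
      have h1 : ∀ k ∈ Finset.range n, x = mk1 (act (u ^ k) f) := by
        intro k _
        rw [← hx (u ^ k) (hu_mem k), ← hf, hactC _ (hu_mem k)]
      calc (n : ℕ) • x = ∑ _k ∈ Finset.range n, x := by
            rw [Finset.sum_const, Finset.card_range]
        _ = ∑ k ∈ Finset.range n, mk1 (act (u ^ k) f) := Finset.sum_congr rfl h1
        _ = mk1 (∑ k ∈ Finset.range n, act (u ^ k) f) := (map_sum mk1 _ _).symm
        _ = mk1 ((n : ℕ) • g) := by rw [hsum]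
        _ = (n : ℕ) • mk1 g := by rw [map_nsmul]
    have hQunit : IsUnit ((n : ℕ) : stmt7.Q R π 1 a b) := by
      have := hunit.map (mk1.comp (MvPowerSeries.C (σ := Fin 2) (R := R)))
      rwa [map_natCast] at this
    have hxg : x = mk1 g := by
      rw [nsmul_eq_mul, nsmul_eq_mul] at hnx
      exact hQunit.mul_left_cancel hnx
    set T : Finset (ℕ × ℕ) :=
      (Finset.range n ×ˢ Finset.range n).filter
        (fun p => (n : ℤ) ∣ ((p.1 : ℤ) + r * (p.2 : ℤ))) with hT
    set piece : ℕ → ℕ → MvPowerSeries (Fin 2) R := fun i j =>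
      (fun e => MvPowerSeries.coeff
        (Finsupp.single 0 (n * e 0 + i) + Finsupp.single 1 (n * e 1 + j)) g) with hpiece_def
    have hpiece : ∀ (i j : ℕ) (e : Fin 2 →₀ ℕ),
        MvPowerSeries.coeff e (piece i j)
          = MvPowerSeries.coeff
              (Finsupp.single 0 (n * e 0 + i) + Finsupp.single 1 (n * e 1 + j)) g :=
      fun _ _ _ => rfl
    have hdecomp : g = ∑ p ∈ T,
        (MvPowerSeries.monomial (Finsupp.single 0 p.1 + Finsupp.single 1 p.2) 1)
          * Φ (piece p.1 p.2) := by
      ext d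
      rw [map_sum]
      have hterm : ∀ p ∈ T,
          MvPowerSeries.coeff d
            ((MvPowerSeries.monomial (Finsupp.single 0 p.1 + Finsupp.single 1 p.2) 1)
              * Φ (piece p.1 p.2))
            = if p.1 = d 0 % n ∧ p.2 = d 1 % n then MvPowerSeries.coeff d g else 0 := by
        intro p hp
        rw [hT, Finset.mem_filter, Finset.mem_product, Finset.mem_range, Finset.mem_range] at hp
        obtain ⟨⟨hp1, hp2⟩, hpdvd⟩ := hp
        rw [MvPowerSeries.coeff_monomial_mul, one_mul, hΦ, stmt7aux.fin2_sub0,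
          stmt7aux.fin2_sub1, hpiece, stmt7aux.fin2_app0, stmt7aux.fin2_app1]
        by_cases hmatch : p.1 = d 0 % n ∧ p.2 = d 1 % n
        · obtain ⟨hi, hj⟩ := hmatch
          have hile : p.1 ≤ d 0 := hi ▸ Nat.mod_le _ _
          have hjle : p.2 ≤ d 1 := hj ▸ Nat.mod_le _ _
          have hdi : n ∣ d 0 - p.1 := hi ▸ Nat.dvd_sub_mod (d 0)
          have hdj : n ∣ d 1 - p.2 := hj ▸ Nat.dvd_sub_mod (d 1)
          rw [if_pos ((stmt7aux.fin2_le _ _ d).mpr ⟨hile, hjle⟩), if_pos ⟨hdi, hdj⟩,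
            if_pos ⟨hi, hj⟩, Nat.mul_div_cancel' hdi, Nat.mul_div_cancel' hdj,
            Nat.sub_add_cancel hile, Nat.sub_add_cancel hjle, ← stmt7aux.fin2_eq]
        · rw [if_neg hmatch]
          split_ifs with h1 h2
          · exfalso
            apply hmatch
            obtain ⟨hile, hjle⟩ := (stmt7aux.fin2_le _ _ d).mp h1
            obtain ⟨k0, hk0⟩ := h2.1
            obtain ⟨k1, hk1⟩ := h2.2
            have e0 : d 0 = n * k0 + p.1 := by omega
            have e1 : d 1 = n * k1 + p.2 := by omega
            constructor
            · rw [e0, Nat.mul_add_mod, Nat.mod_eq_of_lt hp1]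
            · rw [e1, Nat.mul_add_mod, Nat.mod_eq_of_lt hp2]
          · rfl
          · rfl
      rw [Finset.sum_congr rfl hterm]
      by_cases hd : (n : ℤ) ∣ ((d 0 : ℤ) + r * (d 1 : ℤ))
      · have hmem : (d 0 % n, d 1 % n) ∈ T := by
          rw [hT]
          simp only [Finset.mem_filter, Finset.mem_product, Finset.mem_range]
          refine ⟨⟨Nat.mod_lt _ hn, Nat.mod_lt _ hn⟩, ?_⟩
          have e0 : (n : ℤ) ∣ (d 0 : ℤ) - ((d 0 % n : ℕ) : ℤ) := by
            rw [Int.natCast_mod]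
            exact ⟨((d 0 : ℤ) / n), by rw [Int.emod_def]; ring⟩
          have e1 : (n : ℤ) ∣ (d 1 : ℤ) - ((d 1 % n : ℕ) : ℤ) := by
            rw [Int.natCast_mod]
            exact ⟨((d 1 : ℤ) / n), by rw [Int.emod_def]; ring⟩
          have key : ((d 0 % n : ℕ) : ℤ) + r * ((d 1 % n : ℕ) : ℤ)
              = ((d 0 : ℤ) + r * (d 1 : ℤ))
                - (((d 0 : ℤ) - ((d 0 % n : ℕ) : ℤ)) + r * ((d 1 : ℤ) - ((d 1 % n : ℕ) : ℤ))) := by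
            ring
          rw [key]
          exact dvd_sub hd (dvd_add e0 (e1.mul_left r))
        have huniq : ∀ q ∈ T, q ≠ (d 0 % n, d 1 % n) →
            (if q.1 = d 0 % n ∧ q.2 = d 1 % n then MvPowerSeries.coeff d g else 0) = 0 := by
          intro q _ hqne
          rw [if_neg]
          intro hc
          exact hqne (Prod.ext hc.1 hc.2)
        rw [Finset.sum_eq_single_of_mem (d 0 % n, d 1 % n) hmem huniq, if_pos ⟨rfl, rfl⟩]
      · have h0 : MvPowerSeries.coeff d g = 0 := by rw [hg, if_neg hd]
        rw [h0]
        symm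
        apply Finset.sum_eq_zero
        intro p _
        exact ite_self 0
    rw [SetLike.mem_coe, hxg, hdecomp, map_sum]
    apply Submodule.sum_mem
    intro p hp
    rw [hT, Finset.mem_filter, Finset.mem_product, Finset.mem_range, Finset.mem_range] at hp
    obtain ⟨⟨hp1, hp2⟩, hpdvd⟩ := hp
    rw [map_mul, ← hψ (piece p.1 p.2), mul_comm, ← halg, ← Algebra.smul_def]
    refine Submodule.smul_mem _ _ (Submodule.subset_span ?_)
    exact ⟨p.1, p.2, hp1, hp2, hpdvd, by rw [hmono, map_mul, map_pow, map_pow]⟩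
  · -- span ⊆ invariants
    intro x hx
    simp only [SetLike.mem_coe] at hx
    simp only [Set.mem_setOf_eq]
    intro ξ hξ
    have hξn : ξ ^ n = 1 := (mem_rootsOfUnity n ξ).mp hξ
    induction hx using Submodule.span_induction with
    | mem y hy =>
      obtain ⟨i, j, hi, hj, hij, rfl⟩ := hy
      rw [← map_pow, ← map_pow, ← map_mul, hactC ξ hξ, ← hmono,
        stmt7aux.act_monomial act hact, stmt7aux.fin2_app0, stmt7aux.fin2_app1,
        stmt7aux.chi_eq, stmt7aux.unit_zpow_one hξn hij, Units.val_one, one_smul]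
    | zero =>
      have h0 : (0 : stmt7.Q R π 1 a b) = mk1 0 := (map_zero mk1).symm
      rw [h0, hactC ξ hξ, stmt7aux.act_zero act hact]
    | add y z hy hz hy' hz' =>
      obtain ⟨fy, rfl⟩ := Ideal.Quotient.mk_surjective y
      obtain ⟨fz, rfl⟩ := Ideal.Quotient.mk_surjective z
      have hy2 : mk1 (act ξ fy) = mk1 fy := by rw [← hactC ξ hξ]; exact hy'
      have hz2 : mk1 (act ξ fz) = mk1 fz := by rw [← hactC ξ hξ]; exact hz'
      rw [← map_add, hactC ξ hξ, stmt7aux.act_add act hact, map_add, hy2, hz2, map_add]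
    | smul c y hy hy' =>
      obtain ⟨gc, rfl⟩ := Ideal.Quotient.mk_surjective c
      obtain ⟨fy, rfl⟩ := Ideal.Quotient.mk_surjective y
      have hy2 : mk1 (act ξ fy) = mk1 fy := by rw [← hactC ξ hξ]; exact hy'
      rw [Algebra.smul_def, halg, hψ, ← map_mul, hactC ξ hξ,
        stmt7aux.act_mul act hact ξ (Φ gc) fy,
        stmt7aux.act_Phi act hact hn ξ hξn Φ hΦ gc, map_mul, hy2, ← map_mul]
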